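/- Let E⁰, E^δ : [0,T] → ℝ be nonnegative C¹ functions, g : [0,T] → ℝ nonnegative continuous, and suppose dE⁰/dt ≤ −(1/4)g and dE^δ/dt ≤ K·g·E^δ on [0,T] for some constant K ≥ 0. If N ≥ 4K(E⁰(0)+1), then the function t ↦ (E⁰(t)+1)^N·E^δ(t) is nonincreasing on [0,T], and in particular E^δ(t) ≤ E^δ(0)·(E⁰(0)+1)^N for all t ∈ [0,T]. -/
import Mathlib


open Set

/-- Abstract Grönwall-type mechanism: if `E⁰` dissipates at rate `g/4` and `E^δ`
grows at rate at most `K g E^δ`, then `(E⁰+1)^N E^δ` is nonincreasing for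
`N ≥ 4K(E⁰(0)+1)`, and `E^δ(t) ≤ E^δ(0) (E⁰(0)+1)^N`. -/
theorem energy_propagation
    (T : ℝ) (hT : 0 ≤ T)
    (E0 Eδ E0' Eδ' g : ℝ → ℝ) (K N : ℝ) (hK : 0 ≤ K)
    (hE0nonneg : ∀ t ∈ Icc 0 T, 0 ≤ E0 t)
    (hEδnonneg : ∀ t ∈ Icc 0 T, 0 ≤ Eδ t)
    (hgcont : ContinuousOn g (Icc 0 T))
    (hgnonneg : ∀ t ∈ Icc 0 T, 0 ≤ g t)
    (hE0deriv : ∀ t ∈ Icc 0 T, HasDerivAt E0 (E0' t) t)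
    (hEδderiv : ∀ t ∈ Icc 0 T, HasDerivAt Eδ (Eδ' t) t)
    (hE0'cont : ContinuousOn E0' (Icc 0 T))
    (hEδ'cont : ContinuousOn Eδ' (Icc 0 T))
    (hE0dissip : ∀ t ∈ Icc 0 T, E0' t ≤ -(1 / 4) * g t)
    (hEδgrowth : ∀ t ∈ Icc 0 T, Eδ' t ≤ K * g t * Eδ t)
    (hN : N ≥ 4 * K * (E0 0 + 1)) :
    AntitoneOn (fun t => (E0 t + 1) ^ N * Eδ t) (Icc 0 T) ∧
    ∀ t ∈ Icc 0 T, Eδ t ≤ Eδ 0 * (E0 0 + 1) ^ N := by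
  have h0T : (0:ℝ) ∈ Icc 0 T := left_mem_Icc.2 hT
  have hE0pos : ∀ t ∈ Icc (0:ℝ) T, (0:ℝ) < E0 t + 1 := fun t ht => by
    linarith [hE0nonneg t ht]
  have hNnonneg : 0 ≤ N := by nlinarith [hE0nonneg 0 h0T]
  -- E0 is antitone
  have hE0anti : AntitoneOn E0 (Icc 0 T) := by
    apply antitoneOn_of_deriv_nonpos (convex_Icc 0 T)
    · exact fun t ht => (hE0deriv t ht).continuousAt.continuousWithinAt
    · intro x hx
      rw [interior_Icc] at hx
      exact (hE0deriv x (Ioo_subset_Icc_self hx)).differentiableAt.differentiableWithinAt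
    · intro x hx
      rw [interior_Icc] at hx
      have hx' := Ioo_subset_Icc_self hx
      rw [(hE0deriv x hx').deriv]
      linarith [hE0dissip x hx', hgnonneg x hx']
  -- derivative of the product
  have hF : ∀ x ∈ Icc (0:ℝ) T, HasDerivAt (fun t => (E0 t + 1) ^ N * Eδ t)
      ((E0' x * N * (E0 x + 1) ^ (N - 1)) * Eδ x + (E0 x + 1) ^ N * Eδ' x) x := by
    intro x hx
    have h1 : HasDerivAt (fun t => E0 t + 1) (E0' x) x := (hE0deriv x hx).add_const 1
    have h2 := h1.rpow_const (p := N) (Or.inl (ne_of_gt (hE0pos x hx)))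
    exact h2.mul (hEδderiv x hx)
  have hAnti : AntitoneOn (fun t => (E0 t + 1) ^ N * Eδ t) (Icc 0 T) := by
    apply antitoneOn_of_deriv_nonpos (convex_Icc 0 T)
    · exact fun t ht => (hF t ht).continuousAt.continuousWithinAt
    · intro x hx
      rw [interior_Icc] at hx
      exact (hF x (Ioo_subset_Icc_self hx)).differentiableAt.differentiableWithinAt
    · intro x hx
      rw [interior_Icc] at hx
      have hx' := Ioo_subset_Icc_self hx
      rw [(hF x hx').deriv]
      have hpos := hE0pos x hx'
      have hA : (0:ℝ) ≤ (E0 x + 1) ^ (N - 1) := Real.rpow_nonneg (le_of_lt hpos) _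
      have hBN : (E0 x + 1) ^ N = (E0 x + 1) ^ (N - 1) * (E0 x + 1) := by
        rw [← Real.rpow_add_one (ne_of_gt hpos) (N - 1), sub_add_cancel]
      have hg := hgnonneg x hx'
      have hd := hEδnonneg x hx'
      have hf' := hE0dissip x hx'
      have he' := hEδgrowth x hx'
      have hKB : K * (E0 x + 1) ≤ N / 4 := by
        have := hE0anti h0T hx' hx'.1
        nlinarith
      have h1 : (N * (E0 x + 1) ^ (N - 1) * Eδ x) * E0' x
          ≤ (N * (E0 x + 1) ^ (N - 1) * Eδ x) * (-(1 / 4) * g x) :=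
        mul_le_mul_of_nonneg_left hf'
          (by positivity)
      have h2 : ((E0 x + 1) ^ (N - 1) * (E0 x + 1)) * Eδ' x
          ≤ ((E0 x + 1) ^ (N - 1) * (E0 x + 1)) * (K * g x * Eδ x) :=
        mul_le_mul_of_nonneg_left he' (by positivity)
      have h3 : ((E0 x + 1) ^ (N - 1) * Eδ x * g x) * (K * (E0 x + 1))
          ≤ ((E0 x + 1) ^ (N - 1) * Eδ x * g x) * (N / 4) :=
        mul_le_mul_of_nonneg_left hKB (by positivity)
      rw [hBN]
      nlinarith [h1, h2, h3]
  refine ⟨hAnti, fun t ht => ?_⟩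
  have hF0 : (E0 t + 1) ^ N * Eδ t ≤ (E0 0 + 1) ^ N * Eδ 0 := hAnti h0T ht ht.1
  have hone : (1:ℝ) ≤ (E0 t + 1) ^ N :=
    Real.one_le_rpow (by linarith [hE0nonneg t ht]) hNnonneg
  have := le_mul_of_one_le_left (hEδnonneg t ht) hone
  linarith [hF0, this]
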